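/- Let L be the Laplacian of a connected graph and L⁺ its Moore–Penrose pseudoinverse. Then R(α,β) = L⁺_{αα} + L⁺_{ββ} − 2L⁺_{αβ} defines a metric on the vertex set: it is symmetric, nonnegative, zero iff α = β, and satisfies the triangle inequality. -/

import Mathlib

open Matrix

/-- The four Moore–Penrose pseudoinverse conditions for real matrices. -/
def IsMoorePenrose {V : Type*} [Fintype V] [DecidableEq V] (L Lp : Matrix V V ℝ) : Prop :=
  L * Lp * L = L ∧ Lp * L * Lp = Lp ∧ (L * Lp)ᵀ = L * Lp ∧ (Lp * L)ᵀ = Lp * L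

/-- Effective resistance between two nodes, from the pseudoinverse of the Laplacian. -/
def effRes {V : Type*} (Lp : Matrix V V ℝ) (α β : V) : ℝ :=
  Lp α α + Lp β β - 2 * Lp α β

section Aux

variable {V : Type*} [Fintype V] [DecidableEq V]

/-- Uniqueness of the Moore–Penrose pseudoinverse. -/
lemma mp_unique {A B C : Matrix V V ℝ} (hB : IsMoorePenrose A B) (hC : IsMoorePenrose A C) :
    B = C := by
  obtain ⟨hB1, hB2, hB3, hB4⟩ := hB
  obtain ⟨hC1, hC2, hC3, hC4⟩ := hC
  have e1 : (A * C) * (A * B) = A * B := by rw [← mul_assoc, hC1]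
  have e2 : (A * B) * (A * C) = A * C := by rw [← mul_assoc, hB1]
  have hAB : A * B = A * C := by
    calc A * B = (A * C) * (A * B) := e1.symm
    _ = (A * C)ᵀ * (A * B)ᵀ := by rw [hC3, hB3]
    _ = ((A * B) * (A * C))ᵀ := (transpose_mul _ _).symm
    _ = (A * C)ᵀ := by rw [e2]
    _ = A * C := hC3
  have e1' : (B * A) * (C * A) = B * A := by
    rw [← mul_assoc, mul_assoc B A C, mul_assoc B (A * C) A, hC1]
  have e2' : (C * A) * (B * A) = C * A := by
    rw [← mul_assoc, mul_assoc C A B, mul_assoc C (A * B) A, hB1]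
  have hBA : B * A = C * A := by
    calc B * A = (B * A) * (C * A) := e1'.symm
    _ = (B * A)ᵀ * (C * A)ᵀ := by rw [hB4, hC4]
    _ = ((C * A) * (B * A))ᵀ := (transpose_mul _ _).symm
    _ = (C * A)ᵀ := by rw [e2']
    _ = C * A := hC4
  calc B = B * A * B := hB2.symm
  _ = (C * A) * B := by rw [hBA]
  _ = C * (A * B) := mul_assoc _ _ _
  _ = C * (A * C) := by rw [hAB]
  _ = C * A * C := (mul_assoc _ _ _).symm
  _ = C := hC2

/-- The "source minus target" indicator vector. -/
def st (a b : V) : V → ℝ := fun i => (if i = a then 1 else 0) - (if i = b then 1 else 0)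

lemma st_sum (a b : V) : ∑ i, st a b i = 0 := by
  simp [st, Finset.sum_sub_distrib]

lemma dotProduct_st (w : V → ℝ) (a b : V) : st a b ⬝ᵥ w = w a - w b := by
  simp [st, dotProduct, sub_mul, ite_mul, Finset.sum_sub_distrib]

lemma mulVec_st (M : Matrix V V ℝ) (a b : V) : M *ᵥ st a b = fun i => M i a - M i b := by
  ext i
  simp [mulVec, dotProduct, st, mul_sub, mul_ite, Finset.sum_sub_distrib]

lemma st_neg (a b : V) : st b a = -(st a b) := by
  funext i; simp [st, neg_sub]

lemma st_split (a b c : V) : st a c = st a b + st b c := by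
  funext i; simp only [st, Pi.add_apply]; ring

/-- Maximum principle for functions superharmonic away from `a`. -/
lemma max_principle (G : SimpleGraph V) [DecidableRel G.Adj] (hconn : G.Connected)
    (v : V → ℝ) (a : V) (hv : ∀ i, i ≠ a → (G.lapMatrix ℝ *ᵥ v) i ≤ 0) :
    ∀ i, v i ≤ v a := by
  haveI : Nonempty V := hconn.nonempty
  obtain ⟨m, hm⟩ := Finite.exists_max v
  have hstep : ∀ i, v i = v m → i ≠ a → ∀ j, G.Adj i j → v j = v m := by
    intro i hi hia j hij
    have h1 := hv i hia
    rw [SimpleGraph.lapMatrix_mulVec_apply] at h1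
    have h3 : ∀ u ∈ G.neighborFinset i, 0 ≤ v i - v u := by
      intro u _
      rw [hi]
      linarith [hm u]
    have h2 : ∑ u ∈ G.neighborFinset i, (v i - v u) = 0 := by
      apply le_antisymm
      · rw [Finset.sum_sub_distrib, Finset.sum_const,
          SimpleGraph.card_neighborFinset_eq_degree, nsmul_eq_mul]
        linarith
      · exact Finset.sum_nonneg h3
    have h5 := (Finset.sum_eq_zero_iff_of_nonneg h3).mp h2 j (by rwa [SimpleGraph.mem_neighborFinset])
    rw [← hi]
    linarith
  have key : ∀ (u w : V) (p : G.Walk u w), w = a → v u = v m → v a = v m := by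
    intro u w p
    induction p with
    | nil => rintro rfl h; exact h
    | @cons x y z hadj p' ih =>
      intro hz hx
      by_cases hxa : x = a
      · exact hxa ▸ hx
      · exact ih hz (hstep x hx hxa y hadj)
  obtain ⟨p⟩ := hconn.preconnected m a
  have ha : v a = v m := key m a p rfl rfl
  intro i
  rw [ha]
  exact hm i

end Aux

/-- For a connected finite graph with Laplacian `L` and Moore–Penrose pseudoinverse `L⁺`,
the effective resistance `R(α,β) = L⁺_{αα} + L⁺_{ββ} - 2 L⁺_{αβ}` is a metric on the
vertex set: symmetric, nonnegative, zero iff the vertices coincide, and satisfying the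
triangle inequality. -/
theorem effective_resistance_is_metric {V : Type*} [Fintype V] [DecidableEq V]
    (G : SimpleGraph V) [DecidableRel G.Adj] (hconn : G.Connected)
    (Lp : Matrix V V ℝ) (hLp : IsMoorePenrose (G.lapMatrix ℝ) Lp) :
    (∀ α β : V, effRes Lp α β = effRes Lp β α) ∧
    (∀ α β : V, 0 ≤ effRes Lp α β) ∧
    (∀ α β : V, effRes Lp α β = 0 ↔ α = β) ∧
    (∀ α β γ : V, effRes Lp α γ ≤ effRes Lp α β + effRes Lp β γ) := by
  obtain ⟨h1, h2, h3, h4⟩ := hLp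
  set L := G.lapMatrix ℝ with hLdef
  have hL : Lᵀ = L := G.isSymm_lapMatrix (R := ℝ)
  -- Lp is symmetric
  have hmpT : IsMoorePenrose L Lpᵀ := by
    refine ⟨?_, ?_, ?_, ?_⟩
    · have := congrArg Matrix.transpose h1
      simpa [transpose_mul, hL, mul_assoc] using this
    · have := congrArg Matrix.transpose h2
      simpa [transpose_mul, hL, mul_assoc] using this
    · rw [transpose_mul, transpose_transpose, hL]
      conv_lhs => rw [← h4, transpose_mul, hL]
    · rw [transpose_mul, transpose_transpose, hL]
      conv_lhs => rw [← h3, transpose_mul, hL]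
  have hsym : Lpᵀ = Lp := mp_unique hmpT ⟨h1, h2, h3, h4⟩
  have hab : ∀ a b, Lp a b = Lp b a := by
    intro a b
    conv_lhs => rw [← hsym]
    rw [transpose_apply]
  have hcomm : Lp * L = L * Lp := by
    rw [← h4, transpose_mul, hsym, hL]
  -- effRes as a quadratic form
  have heff : ∀ a b, effRes Lp a b = st a b ⬝ᵥ Lp *ᵥ st a b := by
    intro a b
    rw [mulVec_st, dotProduct_st]
    simp only [effRes]
    rw [hab b a]
    ring
  -- Lp is positive semidefinite
  have hpsd : Lp.PosSemidef := by
    refine posSemidef_iff_dotProduct_mulVec.mpr ⟨?_, ?_⟩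
    · show Lpᴴ = Lp
      rw [conjTranspose_eq_transpose_of_trivial, hsym]
    · intro x
      rw [star_trivial, ← h2, ← mulVec_mulVec, ← mulVec_mulVec, dotProduct_mulVec]
      have hx : x ᵥ* Lp = Lp *ᵥ x := by
        conv_lhs => rw [← hsym]
        exact vecMul_transpose _ _
      rw [hx]
      have := (SimpleGraph.posSemidef_lapMatrix ℝ G).dotProduct_mulVec_nonneg (Lp *ᵥ x)
      simpa using this
  -- Projection property: L (Lp x) = x for x with zero sum
  have hproj : ∀ x : V → ℝ, ∑ i, x i = 0 → L *ᵥ (Lp *ᵥ x) = x := by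
    intro x hx
    have hker : L *ᵥ (x - (Lp * L) *ᵥ x) = 0 := by
      rw [mulVec_sub, mulVec_mulVec, ← mul_assoc, h1, sub_self]
    have hconst : ∀ i j, (x - (Lp * L) *ᵥ x) i = (x - (Lp * L) *ᵥ x) j := by
      have := (G.lapMatrix_mulVec_eq_zero_iff_forall_reachable
        (x := x - (Lp * L) *ᵥ x)).mp hker
      exact fun i j => this i j (hconn.preconnected i j)
    have hrow : ∀ i, ∑ j, L i j = 0 := by
      intro i
      have := congrFun (G.lapMatrix_mulVec_const_eq_zero (R := ℝ)) i
      simpa [mulVec, dotProduct] using this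
    have hcol : ∀ j, ∑ i, L i j = 0 := by
      intro j
      have : ∀ i, L i j = L j i := fun i => by
        conv_lhs => rw [← hL]
        rw [transpose_apply]
      rw [Finset.sum_congr rfl fun i _ => this i]
      exact hrow j
    have hsum : ∑ i, ((Lp * L) *ᵥ x) i = 0 := by
      rw [hcomm, ← mulVec_mulVec]
      calc ∑ i, (L *ᵥ (Lp *ᵥ x)) i = ∑ i, ∑ j, L i j * (Lp *ᵥ x) j := by
            simp [mulVec, dotProduct]
      _ = ∑ j, (∑ i, L i j) * (Lp *ᵥ x) j := by
            rw [Finset.sum_comm]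
            simp [Finset.sum_mul]
      _ = 0 := by simp [hcol]
    have hsum2 : ∑ j, (x - (Lp * L) *ᵥ x) j = 0 := by
      simp only [Pi.sub_apply, Finset.sum_sub_distrib, hx, hsum, sub_zero]
    have hdzero : ∀ i, (x - (Lp * L) *ᵥ x) i = 0 := by
      intro i
      have hc : ∑ j, (x - (Lp * L) *ᵥ x) j = (Fintype.card V : ℝ) * (x - (Lp * L) *ᵥ x) i := by
        rw [Finset.sum_congr rfl fun j _ => hconst j i]
        simp [Finset.sum_const, nsmul_eq_mul, Finset.card_univ]
        ring
      have hcard : (Fintype.card V : ℝ) ≠ 0 := by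
        haveI : Nonempty V := hconn.nonempty
        exact_mod_cast (Fintype.card_pos).ne'
      have := hc.symm.trans hsum2
      exact (mul_eq_zero.mp this).resolve_left hcard
    have hfix : (Lp * L) *ᵥ x = x := by
      funext i
      have := hdzero i
      simp only [Pi.sub_apply, sub_eq_zero] at this
      exact this.symm
    rw [mulVec_mulVec, ← hcomm, hfix]
  -- Max principle for potentials
  have hmax : ∀ a c : V, ∀ i, (Lp *ᵥ st a c) i ≤ (Lp *ᵥ st a c) a := by
    intro a c
    apply max_principle G hconn
    intro i hia
    rw [← hLdef, hproj (st a c) (st_sum a c)]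
    simp only [st, if_neg hia]
    split_ifs <;> norm_num
  have hmin : ∀ a c : V, ∀ i, (Lp *ᵥ st a c) c ≤ (Lp *ᵥ st a c) i := by
    intro a c i
    have h := hmax c a i
    rw [st_neg, mulVec_neg] at h
    simpa using h
  have hswap : ∀ (y z : V → ℝ), y ⬝ᵥ Lp *ᵥ z = z ⬝ᵥ Lp *ᵥ y := by
    intro y z
    conv_lhs => rw [dotProduct_mulVec, ← hsym, vecMul_transpose]
    exact dotProduct_comm _ _
  refine ⟨?_, ?_, ?_, ?_⟩
  · intro a b
    simp only [effRes]
    rw [hab a b]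
    ring
  · intro a b
    rw [heff]
    have := hpsd.dotProduct_mulVec_nonneg (st a b)
    simpa using this
  · intro a b
    constructor
    · intro h
      by_contra hne
      have h0 : st a b ⬝ᵥ Lp *ᵥ st a b = 0 := by rw [← heff]; exact h
      have hLpx : Lp *ᵥ st a b = 0 := (hpsd.dotProduct_mulVec_zero_iff (st a b)).mp (by simpa using h0)
      have hz := hproj (st a b) (st_sum a b)
      rw [hLpx, mulVec_zero] at hz
      have := congrFun hz a
      simp [st, hne] at this
    · rintro rfl
      simp only [effRes]
      ring
  · intro a b c
    have hw := heff a b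
    have hu := heff b c
    have hv := heff a c
    set w := Lp *ᵥ st a b with hwd
    set u := Lp *ᵥ st b c with hud
    have step : st a c ⬝ᵥ Lp *ᵥ st a c =
        st a b ⬝ᵥ Lp *ᵥ st a c + st b c ⬝ᵥ Lp *ᵥ st a c := by
      nth_rewrite 1 [st_split a b c]
      rw [add_dotProduct]
    have t1 : st a b ⬝ᵥ Lp *ᵥ st a c = w a - w c := by
      rw [hswap, hwd, dotProduct_st]
    have t2 : st b c ⬝ᵥ Lp *ᵥ st a c = u a - u c := by
      rw [hswap, hud, dotProduct_st]
    have e1 : st a b ⬝ᵥ w = w a - w b := dotProduct_st w a b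
    have e2 : st b c ⬝ᵥ u = u b - u c := dotProduct_st u b c
    have m1 : w b ≤ w c := hmin a b c
    have m2 : u a ≤ u b := hmax b c a
    rw [hv, hw, hu, step, t1, t2, e1, e2]
    linarith
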